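/- Let K be a finite Eulerian poset with rank function ρ and P ∈ Or(K) a projection. Then im(P), as an induced subposet of K, is graded with rank function ρ (it has minimum, maximum, and any two elements x < y in im(P) with ρ(y) - ρ(x) > 1 admit z ∈ im(P) with x ≤ z ⋖ y). -/

import Mathlib

open scoped Classical

section Aux

variable {K : Type*} [PartialOrder K] [Fintype K]

private lemma stmt14_exists_covby_le {x y : K} (h : x < y) : ∃ z, x ⋖ z ∧ z ≤ y := by
  classical
  have hne : (Finset.univ.filter (fun z : K => x < z ∧ z ≤ y)).Nonempty :=
    ⟨y, by simp [h]⟩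
  obtain ⟨m, hm, hmin⟩ := Finset.exists_minimal hne
  simp only [Finset.mem_filter, Finset.mem_univ, true_and] at hm
  refine ⟨m, ⟨hm.1, fun c hxc hcm => ?_⟩, hm.2⟩
  have hcmem : c ∈ Finset.univ.filter (fun z : K => x < z ∧ z ≤ y) := by
    simp only [Finset.mem_filter, Finset.mem_univ, true_and]
    exact ⟨hxc, le_trans hcm.le hm.2⟩
  exact lt_irrefl _ (lt_of_lt_of_le hcm (hmin hcmem hcm.le))

private lemma stmt14_exists_le_covby {x y : K} (h : x < y) : ∃ z, x ≤ z ∧ z ⋖ y := by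
  classical
  have hne : (Finset.univ.filter (fun z : K => x ≤ z ∧ z < y)).Nonempty :=
    ⟨x, by simp [h]⟩
  obtain ⟨m, hm, hmax⟩ := Finset.exists_maximal hne
  simp only [Finset.mem_filter, Finset.mem_univ, true_and] at hm
  refine ⟨m, hm.1, hm.2, fun c hmc hcy => ?_⟩
  have hcmem : c ∈ Finset.univ.filter (fun z : K => x ≤ z ∧ z < y) := by
    simp only [Finset.mem_filter, Finset.mem_univ, true_and]
    exact ⟨le_trans hm.1 hmc.le, hcy⟩
  exact lt_irrefl _ (lt_of_lt_of_le hmc (hmax hcmem hmc.le))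

private lemma stmt14_rho_strict (ρ : K → ℕ) (hρ : ∀ x y : K, x ⋖ y → ρ y = ρ x + 1) :
    ∀ y x : K, x < y → ρ x < ρ y := by
  intro y
  induction y using WellFoundedLT.induction with
  | _ y ih =>
    intro x hxy
    obtain ⟨w, hxw, hwy⟩ := stmt14_exists_le_covby hxy
    rcases eq_or_lt_of_le hxw with rfl | h
    · rw [hρ _ _ hwy]; omega
    · have h1 := ih w hwy.lt x h
      rw [hρ _ _ hwy]; omega

private lemma stmt14_euler_sum (ρ : K → ℕ) (hρmono : ∀ y x : K, x < y → ρ x < ρ y)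
    (μK : K → K → ℤ)
    (hμK2 : ∀ x y : K, x < y →
      μK x y = -∑ z ∈ Finset.univ.filter (fun z => x ≤ z ∧ z < y), μK x z)
    (hEuler : ∀ x y : K, x ≤ y → μK x y = (-1) ^ (ρ y - ρ x))
    {x y : K} (hxy : x < y) :
    ∑ z ∈ Finset.univ.filter (fun z => x ≤ z ∧ z ≤ y), (-1 : ℤ) ^ ρ z = 0 := by
  classical
  have hsplit : Finset.univ.filter (fun z : K => x ≤ z ∧ z ≤ y)
      = insert y (Finset.univ.filter (fun z : K => x ≤ z ∧ z < y)) := by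
    ext z
    simp only [Finset.mem_insert, Finset.mem_filter, Finset.mem_univ, true_and]
    constructor
    · rintro ⟨h1, h2⟩
      rcases eq_or_lt_of_le h2 with rfl | hlt
      · exact Or.inl rfl
      · exact Or.inr ⟨h1, hlt⟩
    · rintro (rfl | ⟨h1, h2⟩)
      · exact ⟨hxy.le, le_refl _⟩
      · exact ⟨h1, h2.le⟩
  have hynot : y ∉ Finset.univ.filter (fun z : K => x ≤ z ∧ z < y) := by simp
  have hμsum : ∑ z ∈ Finset.univ.filter (fun z : K => x ≤ z ∧ z ≤ y), μK x z = 0 := by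
    rw [hsplit, Finset.sum_insert hynot, hμK2 x y hxy]
    ring
  have hconv : ∀ z ∈ Finset.univ.filter (fun z : K => x ≤ z ∧ z ≤ y),
      (-1 : ℤ) ^ ρ z = (-1) ^ ρ x * μK x z := by
    intro z hz
    simp only [Finset.mem_filter, Finset.mem_univ, true_and] at hz
    have hxz : ρ x ≤ ρ z := by
      rcases eq_or_lt_of_le hz.1 with rfl | h
      · exact le_refl _
      · exact (hρmono z x h).le
    rw [hEuler x z hz.1, ← pow_add, Nat.add_sub_cancel' hxz]
  rw [Finset.sum_congr rfl hconv, ← Finset.mul_sum, hμsum, mul_zero]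

end Aux

/-- Let `K` be a finite Eulerian poset with rank function `ρ` and
`P ∈ Or(K)` a projection. Then `im(P)`, as induced subposet, is graded with rank
function `ρ`: it has minimum `⊥` and maximum `P ⊤`, and any `x < y` in `im(P)` with
`ρ y - ρ x > 1` admit `z ∈ im(P)` with `x ≤ z ⋖ y`. -/
theorem stmt_14 {K : Type*} [PartialOrder K] [Fintype K] [OrderBot K] [OrderTop K]
    (ρ : K → ℕ) (hρbot : ρ ⊥ = 0) (hρ : ∀ x y : K, x ⋖ y → ρ y = ρ x + 1)
    (μK : K → K → ℤ)
    (hμK1 : ∀ x : K, μK x x = 1)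
    (hμK2 : ∀ x y : K, x < y →
      μK x y = -∑ z ∈ Finset.univ.filter (fun z => x ≤ z ∧ z < y), μK x z)
    (hμK3 : ∀ x y : K, ¬ x ≤ y → μK x y = 0)
    (hEuler : ∀ x y : K, x ≤ y → μK x y = (-1) ^ (ρ y - ρ x))
    (P : K → K) (hreg : ∀ x, P x ≤ x) (hmono : Monotone P) (hidem : P ∘ P = P)
    (hproj : ∀ x ∈ Set.range P, ∀ y ∈ Set.range P, x ≤ y →
      ∃ a b : K, {z : K | x ≤ z ∧ z ≤ y ∧ P z = x} = Set.Icc a b) :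
    (⊥ ∈ Set.range P) ∧ (∀ x ∈ Set.range P, x ≤ P ⊤) ∧
    (∀ x ∈ Set.range P, ∀ y ∈ Set.range P, x < y → 1 < ρ y - ρ x →
      ∃ z ∈ Set.range P, x ≤ z ∧ z ⋖ y) := by
  classical
  have hρmono : ∀ y x : K, x < y → ρ x < ρ y := stmt14_rho_strict ρ hρ
  have hfix : ∀ x : K, x ∈ Set.range P → P x = x := by
    rintro x ⟨a, rfl⟩; exact congrFun hidem a
  -- fibers are intervals [w, b]
  have fiber_eq : ∀ w y : K, P w = w → P y = y → w ≤ y →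
      ∃ b : K, w ≤ b ∧ b ≤ y ∧ P b = w ∧
        (Finset.univ.filter (fun z : K => w ≤ z ∧ z ≤ y ∧ P z = w))
          = Finset.univ.filter (fun z : K => w ≤ z ∧ z ≤ b) := by
    intro w y hw hy hwyle
    obtain ⟨a, b, hab⟩ := hproj w ⟨w, hw⟩ y ⟨y, hy⟩ hwyle
    have hwmem : w ∈ Set.Icc a b := by
      rw [← hab]; exact ⟨le_refl w, hwyle, hw⟩
    have hamem : a ∈ {z : K | w ≤ z ∧ z ≤ y ∧ P z = w} := by
      rw [hab]; exact ⟨le_refl a, le_trans hwmem.1 hwmem.2⟩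
    have haw : a = w := le_antisymm hwmem.1 hamem.1
    have hbmem : b ∈ {z : K | w ≤ z ∧ z ≤ y ∧ P z = w} := by
      rw [hab]; exact ⟨le_trans hwmem.1 hwmem.2, le_refl b⟩
    refine ⟨b, hbmem.1, hbmem.2.1, hbmem.2.2, ?_⟩
    ext z
    simp only [Finset.mem_filter, Finset.mem_univ, true_and]
    have := Set.ext_iff.mp hab z
    simp only [Set.mem_setOf_eq, Set.mem_Icc, haw] at this
    constructor
    · intro h; exact this.mp h
    · intro h
      have : w ≤ z ∧ z ≤ y ∧ P z = w := this.mpr h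
      exact this
  -- value of the alternating sum over a fiber
  have fiber_val : ∀ w y : K, P w = w → P y = y → w ≤ y →
      ∑ z ∈ Finset.univ.filter (fun z : K => w ≤ z ∧ z ≤ y ∧ P z = w), (-1 : ℤ) ^ ρ z
        = if (∀ z, w ≤ z → z ≤ y → P z = w → z = w) then (-1 : ℤ) ^ ρ w else 0 := by
    intro w y hw hy hwy
    obtain ⟨b, hwb, hby, hPb, hFeq⟩ := fiber_eq w y hw hy hwy
    rw [hFeq]
    by_cases hs : ∀ z, w ≤ z → z ≤ y → P z = w → z = w
    · have hbw : b = w := hs b hwb hby hPb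
      subst hbw
      rw [if_pos hs]
      have : Finset.univ.filter (fun z : K => b ≤ z ∧ z ≤ b) = {b} := by
        ext z
        simp only [Finset.mem_filter, Finset.mem_univ, true_and, Finset.mem_singleton]
        constructor
        · rintro ⟨h1, h2⟩; exact le_antisymm h2 h1
        · rintro rfl; exact ⟨le_refl _, le_refl _⟩
      rw [this, Finset.sum_singleton]
    · rw [if_neg hs]
      have hwltb : w < b := by
        rcases eq_or_lt_of_le hwb with rfl | h
        · exfalso
          apply hs
          intro z h1 h2 h3
          have hz : z ∈ Finset.univ.filter (fun z : K => w ≤ z ∧ z ≤ w) := by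
            rw [← hFeq]
            simp only [Finset.mem_filter, Finset.mem_univ, true_and]
            exact ⟨h1, h2, h3⟩
          simp only [Finset.mem_filter, Finset.mem_univ, true_and] at hz
          exact le_antisymm hz.2 hz.1
        · exact h
      exact stmt14_euler_sum ρ hρmono μK hμK2 hEuler hwltb
  -- key inductive claim
  have key : ∀ n : ℕ, ∀ x y : K, P x = x → P y = y → x < y → ρ y - ρ x ≤ n →
      ∃ z, P z = z ∧ x ≤ z ∧ z ⋖ y := by
    intro n
    induction n with
    | zero =>
      intro x y hx hy hxy hn
      have := hρmono y x hxy
      omega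
    | succ n ih =>
      intro x y hx hy hxy hn
      by_cases hone : ρ y = ρ x + 1
      · refine ⟨x, hx, le_refl x, hxy, fun c hxc hcy => ?_⟩
        have h1 := hρmono c x hxc
        have h2 := hρmono y c hcy
        omega
      · have hexw : ∃ w, x ≤ w ∧ w < y ∧ P w = w ∧
            (∀ z, w ≤ z → z ≤ y → P z = w → z = w) := by
          by_contra hcon
          push_neg at hcon
          set T := Finset.univ.filter (fun z : K => x ≤ z ∧ z ≤ y) with hT
          have hTsum : ∑ z ∈ T, (-1 : ℤ) ^ ρ z = 0 :=
            stmt14_euler_sum ρ hρmono μK hμK2 hEuler hxy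
          have hmaps : ∀ z ∈ T, P z ∈ T := by
            intro z hz
            simp only [hT, Finset.mem_filter, Finset.mem_univ, true_and] at hz ⊢
            constructor
            · calc x = P x := hx.symm
                _ ≤ P z := hmono hz.1
            · exact le_trans (hreg z) hz.2
          have hfib := Finset.sum_fiberwise_of_maps_to hmaps (fun z => (-1 : ℤ) ^ ρ z)
          have hyT : y ∈ T := by
            simp only [hT, Finset.mem_filter, Finset.mem_univ, true_and]
            exact ⟨hxy.le, le_refl y⟩
          have hz0 : ∀ w ∈ T, w ≠ y →
              ∑ z ∈ T.filter (fun z => P z = w), (-1 : ℤ) ^ ρ z = 0 := by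
            intro w hw hwne
            simp only [hT, Finset.mem_filter, Finset.mem_univ, true_and] at hw
            by_cases hpw : P w = w
            · have hTfil : T.filter (fun z => P z = w)
                  = Finset.univ.filter (fun z : K => w ≤ z ∧ z ≤ y ∧ P z = w) := by
                ext z
                simp only [hT, Finset.filter_filter, Finset.mem_filter, Finset.mem_univ,
                  true_and]
                constructor
                · rintro ⟨⟨h1, h2⟩, h3⟩
                  refine ⟨?_, h2, h3⟩
                  rw [← h3]; exact hreg z
                · rintro ⟨h1, h2, h3⟩
                  exact ⟨⟨le_trans hw.1 h1, h2⟩, h3⟩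
              rw [hTfil, fiber_val w y hpw hy hw.2, if_neg]
              intro hsing
              obtain ⟨z, hz1, hz2, hz3, hz4⟩ :=
                hcon w hw.1 (lt_of_le_of_ne hw.2 hwne) hpw
              exact hz4 (hsing z hz1 hz2 hz3)
            · have : T.filter (fun z => P z = w) = ∅ := by
                rw [Finset.filter_eq_empty_iff]
                intro z _ hPz
                apply hpw
                rw [← hPz]
                exact congrFun hidem z
              rw [this, Finset.sum_empty]
          have hyfib : T.filter (fun z => P z = y) = {y} := by
            ext z
            simp only [hT, Finset.filter_filter, Finset.mem_filter, Finset.mem_univ,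
              true_and, Finset.mem_singleton]
            constructor
            · rintro ⟨⟨h1, h2⟩, h3⟩
              refine le_antisymm h2 ?_
              rw [← h3]; exact hreg z
            · rintro rfl
              exact ⟨⟨hxy.le, le_refl _⟩, hy⟩
          have hsum_eq := Finset.sum_eq_single_of_mem y hyT hz0
          rw [hyfib, Finset.sum_singleton] at hsum_eq
          rw [hfib, hTsum] at hsum_eq
          exact pow_ne_zero (ρ y) (by norm_num : (-1 : ℤ) ≠ 0) hsum_eq.symm
        obtain ⟨w, hxw, hwy, hPw, hSing⟩ := hexw
        obtain ⟨z, hcov, hzy⟩ := stmt14_exists_covby_le hwy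
        have hPz : P z = z := by
          have h1 : w ≤ P z := by
            calc w = P w := hPw.symm
              _ ≤ P z := hmono hcov.lt.le
          rcases eq_or_lt_of_le (hreg z) with heq | hlt
          · exact heq
          · have h2 : ¬ w < P z := fun h => hcov.2 h hlt
            have h3 : P z = w := ((eq_or_lt_of_le h1).resolve_right h2).symm
            exact absurd (hSing z hcov.lt.le hzy h3) hcov.lt.ne'
        rcases eq_or_lt_of_le hzy with rfl | hzlt
        · exact ⟨w, hPw, hxw, hcov⟩
        · have hρxw : ρ x ≤ ρ w := by
            rcases eq_or_lt_of_le hxw with rfl | h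
            · exact le_refl _
            · exact (hρmono w x h).le
          have e1 := hρ w z hcov
          have e3 := hρmono y z hzlt
          have hn' : ρ y - ρ z ≤ n := by omega
          obtain ⟨z', hPz', hzz', hcov'⟩ := ih z y hPz hy hzlt hn'
          exact ⟨z', hPz', le_trans (le_trans hxw hcov.lt.le) hzz', hcov'⟩
  refine ⟨⟨⊥, le_bot_iff.mp (hreg ⊥)⟩, ?_, ?_⟩
  · rintro x ⟨a, rfl⟩
    exact hmono le_top
  · intro x hx y hy hxy hgap
    obtain ⟨z, hPz, hxz, hcov⟩ :=
      key (ρ y - ρ x) x y (hfix x hx) (hfix y hy) hxy (le_refl _)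
    exact ⟨z, ⟨z, hPz⟩, hxz, hcov⟩
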